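/- Let b : E → ℝ² be a bounded measurable vector field with sup_E |b| ≤ b_max, and let k ≥ 1 be an integer. For p ∈ L²(E;ℝ) and q : ℝ² → ℝ continuously differentiable, set b(p,q) := −∫_E p · (b · ∇q) dx and b_h(p,q) := −∫_E (Π⁰_{k−1} p) · (b · Π⁰_{k−1} ∇q) dx. Then b_h(p,q) − b(p,q) ≤ ℰ_{k−1}(b · ∇q) · ℰ_{k−1}(p) + ℰ_{k−1}(∇q) · ℰ_{k−1}(b p) + b_max · ℰ_{k−1}(∇q) · ℰ_{k−1}(p). -/

import Mathlib

open MeasureTheory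
open scoped RealInnerProductSpace

noncomputable section

abbrev Plane := EuclideanSpace ℝ (Fin 2)

/-- `f` is (the restriction of) a real polynomial function on `ℝ²` of total degree at most `m`. -/
def IsPolyDeg (m : ℕ) (f : Plane → ℝ) : Prop :=
  ∃ P : MvPolynomial (Fin 2) ℝ, P.totalDegree ≤ m ∧ ∀ x, f x = MvPolynomial.eval (fun i => x i) P

/-- `Pf` is the `L²(E)`-orthogonal projection of `f` onto the space of polynomial
functions of total degree `≤ m`: it is such a polynomial and the error is
`L²(E)`-orthogonal to all such polynomials. -/
def IsL2Proj (E : Set Plane) (m : ℕ) (f Pf : Plane → ℝ) : Prop :=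
  IsPolyDeg m Pf ∧ ∀ g : Plane → ℝ, IsPolyDeg m g → ∫ x in E, (f x - Pf x) * g x = 0

/-- Componentwise `L²(E)`-projection for `ℝ²`-valued functions. -/
def IsL2ProjV (E : Set Plane) (m : ℕ) (f Pf : Plane → Plane) : Prop :=
  ∀ i : Fin 2, IsL2Proj E m (fun x => f x i) (fun x => Pf x i)

/-- `ℰ_m(f) = ‖f - Π⁰_m f‖_{L²(E)}` for a scalar function, where `Pf = Π⁰_m f`. -/
def errS (E : Set Plane) (f Pf : Plane → ℝ) : ℝ :=
  Real.sqrt (∫ x in E, (f x - Pf x) ^ 2)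

/-- `ℰ_m(f) = ‖f - Π⁰_m f‖_{L²(E)}` for an `ℝ²`-valued function, where `Pf = Π⁰_m f`. -/
def errV (E : Set Plane) (f Pf : Plane → Plane) : ℝ :=
  Real.sqrt (∫ x in E, ‖f x - Pf x‖ ^ 2)

/-- `L²(E)` norm of a scalar function. -/
def l2normS (E : Set Plane) (f : Plane → ℝ) : ℝ :=
  Real.sqrt (∫ x in E, (f x) ^ 2)

/-- `L²(E)` norm of an `ℝ²`-valued function. -/
def l2normV (E : Set Plane) (f : Plane → Plane) : ℝ :=
  Real.sqrt (∫ x in E, ‖f x‖ ^ 2)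


/- ### Auxiliary lemmas -/

theorem IsPolyDeg.continuous' {m : ℕ} {f : Plane → ℝ} (h : IsPolyDeg m f) : Continuous f := by
  obtain ⟨P, -, hP⟩ := h
  have : f = (fun y : Fin 2 → ℝ => MvPolynomial.eval y P) ∘ (fun x : Plane => fun i => x i) :=
    funext hP
  rw [this]
  exact (MvPolynomial.continuous_eval P).comp (PiLp.continuous_ofLp 2 fun _ : Fin 2 => ℝ)

theorem contV_of_components {f : Plane → Plane} (h : ∀ i, Continuous fun x => f x i) :
    Continuous f :=
  (PiLp.continuous_toLp 2 fun _ : Fin 2 => ℝ).comp (continuous_pi h)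

theorem contComp {f : Plane → Plane} (h : Continuous f) (i : Fin 2) :
    Continuous fun x => f x i :=
  (continuous_apply i).comp ((PiLp.continuous_ofLp 2 fun _ : Fin 2 => ℝ).comp h)

theorem int_mul {μ : Measure Plane} {u v : Plane → ℝ} (hu : MemLp u 2 μ) (hv : MemLp v 2 μ) :
    Integrable (fun x => u x * v x) μ := by
  have h := L2.integrable_inner (𝕜 := ℝ) (hu.toLp u) (hv.toLp v)
  refine h.congr ?_
  filter_upwards [hu.coeFn_toLp, hv.coeFn_toLp] with x h1 h2
  rw [h1, h2, RCLike.inner_apply, conj_trivial, mul_comm]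

theorem int_inner {μ : Measure Plane} {u v : Plane → Plane} (hu : MemLp u 2 μ)
    (hv : MemLp v 2 μ) : Integrable (fun x => ⟪u x, v x⟫) μ := by
  have h := L2.integrable_inner (𝕜 := ℝ) (hu.toLp u) (hv.toLp v)
  refine h.congr ?_
  filter_upwards [hu.coeFn_toLp, hv.coeFn_toLp] with x h1 h2
  rw [h1, h2]

theorem cs {μ : Measure Plane} {u v : Plane → ℝ} (hu : MemLp u 2 μ) (hv : MemLp v 2 μ) :
    ∫ x, u x * v x ∂μ ≤ Real.sqrt (∫ x, u x ^ 2 ∂μ) * Real.sqrt (∫ x, v x ^ 2 ∂μ) := by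
  have habs : Integrable (fun x => |u x| * |v x|) μ := by
    have := int_mul hu.norm hv.norm
    simpa [Real.norm_eq_abs] using this
  have h1 : ∫ x, u x * v x ∂μ ≤ ∫ x, |u x| * |v x| ∂μ := by
    refine integral_mono (int_mul hu hv) habs fun x => ?_
    calc u x * v x ≤ |u x * v x| := le_abs_self _
    _ = |u x| * |v x| := abs_mul _ _
  have h2 : ∫ x, |u x| * |v x| ∂μ ≤
      (∫ x, |u x| ^ (2:ℝ) ∂μ) ^ ((1:ℝ)/2) * (∫ x, |v x| ^ (2:ℝ) ∂μ) ^ ((1:ℝ)/2) := by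
    refine integral_mul_le_Lp_mul_Lq_of_nonneg Real.HolderConjugate.two_two
      (Filter.Eventually.of_forall fun x => abs_nonneg _)
      (Filter.Eventually.of_forall fun x => abs_nonneg _) ?_ ?_
    · simpa [Real.norm_eq_abs, ENNReal.ofReal_ofNat] using hu.norm
    · simpa [Real.norm_eq_abs, ENNReal.ofReal_ofNat] using hv.norm
  have e : ∀ w : Plane → ℝ, (∫ x, |w x| ^ (2:ℝ) ∂μ) ^ ((1:ℝ)/2) = Real.sqrt (∫ x, w x ^ 2 ∂μ) := by
    intro w
    have hw : ∀ x, |w x| ^ (2:ℝ) = w x ^ 2 := fun x => by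
      rw [show (2:ℝ) = ((2:ℕ):ℝ) by norm_num, Real.rpow_natCast, sq_abs]
    rw [Real.sqrt_eq_rpow]
    congr 1
    exact integral_congr_ae (Filter.Eventually.of_forall hw)
  calc ∫ x, u x * v x ∂μ ≤ _ := h1
  _ ≤ _ := h2
  _ = _ := by rw [e u, e v]


/-- estimate (5.10) of the paper: for the convection forms
`b(p,q) = −∫_E p (b·∇q)` and `b_h(p,q) = −∫_E (Π⁰_{k−1} p)(b · Π⁰_{k−1}∇q)`,
`b_h(p,q) − b(p,q) ≤ ℰ_{k−1}(b·∇q)ℰ_{k−1}(p) + ℰ_{k−1}(∇q)ℰ_{k−1}(bp) + bmax ℰ_{k−1}(∇q)ℰ_{k−1}(p)`. -/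
theorem statement3
    (E : Set Plane) (hEopen : IsOpen E) (hEbdd : Bornology.IsBounded E)
    (hEpos : 0 < volume E)
    (b : Plane → Plane) (bmax : ℝ) (hbmeas : Measurable b)
    (hbbdd : ∀ x ∈ E, ‖b x‖ ≤ bmax)
    (k : ℕ) (hk : 1 ≤ k)
    (p : Plane → ℝ) (hp : MemLp p 2 (volume.restrict E))
    (q : Plane → ℝ) (hq : ContDiff ℝ 1 q)
    (Pp : Plane → ℝ) (Pgq Pbp : Plane → Plane) (Pbgq : Plane → ℝ)
    (hPp : IsL2Proj E (k - 1) p Pp)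
    (hPgq : IsL2ProjV E (k - 1) (gradient q) Pgq)
    (hPbp : IsL2ProjV E (k - 1) (fun x => p x • b x) Pbp)
    (hPbgq : IsL2Proj E (k - 1) (fun x => ⟪b x, gradient q x⟫) Pbgq) :
    (-∫ x in E, Pp x * ⟪b x, Pgq x⟫) - (-∫ x in E, p x * ⟪b x, gradient q x⟫) ≤
      errS E (fun x => ⟪b x, gradient q x⟫) Pbgq * errS E p Pp
        + errV E (gradient q) Pgq * errV E (fun x => p x • b x) Pbp
        + bmax * errV E (gradient q) Pgq * errS E p Pp := by
  set μ := volume.restrict E with hμ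
  have hmE : MeasurableSet E := hEopen.measurableSet
  haveI : IsFiniteMeasure μ := ⟨by
    rw [hμ, Measure.restrict_apply_univ]; exact hEbdd.measure_lt_top⟩
  have hbmax0 : (0:ℝ) ≤ bmax := by
    obtain ⟨x, hx⟩ := nonempty_of_measure_ne_zero hEpos.ne'
    exact (norm_nonneg _).trans (hbbdd x hx)
  -- continuity facts
  have hGcont : Continuous (gradient q) := by
    unfold gradient
    exact (InnerProductSpace.toDual ℝ Plane).symm.continuous.comp (hq.continuous_fderiv one_ne_zero)
  have hPpcont : Continuous Pp := hPp.1.continuous'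
  have hPbgqcont : Continuous Pbgq := hPbgq.1.continuous'
  have hPgqcont : Continuous Pgq := contV_of_components fun i => (hPgq i).1.continuous'
  have hPbpcont : Continuous Pbp := contV_of_components fun i => (hPbp i).1.continuous'
  -- continuous functions are in L² on E
  have memL2 : ∀ {F : Type} [NormedAddCommGroup F] (f : Plane → F),
      Continuous f → MemLp f 2 μ := by
    intro F _ f hf
    obtain ⟨C, hC⟩ := hEbdd.isCompact_closure.exists_bound_of_continuousOn hf.continuousOn
    exact MemLp.of_bound hf.aestronglyMeasurable C
      (ae_restrict_of_forall_mem hmE fun x hx => hC x (subset_closure hx))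
  have hPpL2 : MemLp Pp 2 μ := memL2 _ hPpcont
  have hPbgqL2 : MemLp Pbgq 2 μ := memL2 _ hPbgqcont
  have hGL2 : MemLp (gradient q) 2 μ := memL2 _ hGcont
  have hPgqL2 : MemLp Pgq 2 μ := memL2 _ hPgqcont
  have hPbpL2 : MemLp Pbp 2 μ := memL2 _ hPbpcont
  have hbae : ∀ᵐ x ∂μ, ‖b x‖ ≤ bmax := ae_restrict_of_forall_mem hmE hbbdd
  have hpbL2 : MemLp (fun x => p x • b x) 2 μ := by
    refine MemLp.of_le (hp.const_mul bmax) (hp.aestronglyMeasurable.smul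
      hbmeas.aestronglyMeasurable) ?_
    filter_upwards [hbae] with x hx
    rw [norm_smul, Real.norm_eq_abs (bmax * p x), abs_mul]
    calc ‖p x‖ * ‖b x‖ ≤ ‖p x‖ * bmax := by
          exact mul_le_mul_of_nonneg_left hx (norm_nonneg _)
    _ ≤ |bmax| * |p x| := by rw [mul_comm]; gcongr; exact le_abs_self _; exact (Real.norm_eq_abs _).le
  have hinnerL2 : ∀ (v : Plane → Plane), Continuous v →
      MemLp (fun x => ⟪b x, v x⟫) 2 μ := by
    intro v hv
    refine MemLp.of_le (memL2 (fun x => bmax * ‖v x‖) (continuous_const.mul hv.norm))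
      (hbmeas.aestronglyMeasurable.inner hv.aestronglyMeasurable) ?_
    filter_upwards [hbae] with x hx
    calc ‖⟪b x, v x⟫‖ = |⟪b x, v x⟫| := rfl
    _ ≤ ‖b x‖ * ‖v x‖ := abs_real_inner_le_norm _ _
    _ ≤ bmax * ‖v x‖ := mul_le_mul_of_nonneg_right hx (norm_nonneg _)
    _ ≤ ‖bmax * ‖v x‖‖ := le_abs_self _
  have hbGL2 : MemLp (fun x => ⟪b x, gradient q x⟫) 2 μ := hinnerL2 _ hGcont
  have hbPgqL2 : MemLp (fun x => ⟪b x, Pgq x⟫) 2 μ := hinnerL2 _ hPgqcont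
  -- MemLp of differences (in lambda form)
  have hd1 : MemLp (fun x => p x - Pp x) 2 μ := hp.sub hPpL2
  have hd1' : MemLp (fun x => Pp x - p x) 2 μ := hPpL2.sub hp
  have hd2 : MemLp (fun x => ⟪b x, gradient q x⟫ - Pbgq x) 2 μ := hbGL2.sub hPbgqL2
  have hd3 : MemLp (fun x => ⟪b x, gradient q x⟫ - ⟪b x, Pgq x⟫) 2 μ := hbGL2.sub hbPgqL2
  have hdw : MemLp (fun x => p x • b x - Pbp x) 2 μ := hpbL2.sub hPbpL2
  have hdz : MemLp (fun x => gradient q x - Pgq x) 2 μ := hGL2.sub hPgqL2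
  have hdwn : MemLp (fun x => ‖p x • b x - Pbp x‖) 2 μ := hdw.norm
  have hdzn : MemLp (fun x => ‖gradient q x - Pgq x‖) 2 μ := hdz.norm
  have hd1abs : MemLp (fun x => |p x - Pp x|) 2 μ := by
    simpa [Real.norm_eq_abs] using hd1.norm
  -- integrability
  have hI1 : Integrable (fun x => p x * ⟪b x, gradient q x⟫) μ := int_mul hp hbGL2
  have hI2 : Integrable (fun x => Pp x * ⟪b x, Pgq x⟫) μ := int_mul hPpL2 hbPgqL2
  have iA : Integrable (fun x => (p x - Pp x) * (⟪b x, gradient q x⟫ - Pbgq x)) μ :=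
    int_mul hd1 hd2
  have iB : Integrable (fun x => ⟪p x • b x - Pbp x, gradient q x - Pgq x⟫) μ :=
    int_inner hdw hdz
  have iC : Integrable
      (fun x => (Pp x - p x) * (⟪b x, gradient q x⟫ - ⟪b x, Pgq x⟫)) μ :=
    int_mul hd1' hd3
  have iZ1 : Integrable (fun x => (p x - Pp x) * Pbgq x) μ := int_mul hd1 hPbgqL2
  have iZ2 : Integrable (fun x => ⟪Pbp x, gradient q x - Pgq x⟫) μ := int_inner hPbpL2 hdz
  -- orthogonality: the two "zero" integrals
  have hZ1 : ∫ x, (p x - Pp x) * Pbgq x ∂μ = 0 := hPp.2 Pbgq hPbgq.1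
  have hZ2 : ∫ x, ⟪Pbp x, gradient q x - Pgq x⟫ ∂μ = 0 := by
    have hpt : ∀ x, ⟪Pbp x, gradient q x - Pgq x⟫
        = ∑ i : Fin 2, (gradient q x i - Pgq x i) * Pbp x i := by
      intro x
      simp only [PiLp.inner_apply, RCLike.inner_apply, conj_trivial, PiLp.sub_apply]
    rw [integral_congr_ae (Filter.Eventually.of_forall hpt),
      integral_finset_sum _ (fun i _ => int_mul
        (memL2 (fun x => gradient q x i - Pgq x i) (((contComp hGcont i).sub (contComp hPgqcont i))))
        (memL2 _ (contComp hPbpcont i)))]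
    refine Finset.sum_eq_zero fun i _ => ?_
    exact (hPgq i).2 _ (hPbp i).1
  -- the splitting identity
  have hpt : ∀ x, p x * ⟪b x, gradient q x⟫ - Pp x * ⟪b x, Pgq x⟫ =
      (p x - Pp x) * (⟪b x, gradient q x⟫ - Pbgq x)
      + ⟪p x • b x - Pbp x, gradient q x - Pgq x⟫
      + (Pp x - p x) * (⟪b x, gradient q x⟫ - ⟪b x, Pgq x⟫)
      + (p x - Pp x) * Pbgq x
      + ⟪Pbp x, gradient q x - Pgq x⟫ := by
    intro x
    simp only [inner_sub_left, inner_sub_right, real_inner_smul_left]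
    ring
  have hsplit : (∫ x, p x * ⟪b x, gradient q x⟫ ∂μ) - (∫ x, Pp x * ⟪b x, Pgq x⟫ ∂μ)
      = (∫ x, (p x - Pp x) * (⟪b x, gradient q x⟫ - Pbgq x) ∂μ)
        + (∫ x, ⟪p x • b x - Pbp x, gradient q x - Pgq x⟫ ∂μ)
        + (∫ x, (Pp x - p x) * (⟪b x, gradient q x⟫ - ⟪b x, Pgq x⟫) ∂μ) := by
    rw [← integral_sub hI1 hI2]
    have : (∫ x, (p x * ⟪b x, gradient q x⟫ - Pp x * ⟪b x, Pgq x⟫) ∂μ)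
        = (∫ x, ((p x - Pp x) * (⟪b x, gradient q x⟫ - Pbgq x)
            + ⟪p x • b x - Pbp x, gradient q x - Pgq x⟫
            + (Pp x - p x) * (⟪b x, gradient q x⟫ - ⟪b x, Pgq x⟫)
            + (p x - Pp x) * Pbgq x
            + ⟪Pbp x, gradient q x - Pgq x⟫) ∂μ) :=
      integral_congr_ae (Filter.Eventually.of_forall hpt)
    have iAB : Integrable (fun x => (p x - Pp x) * (⟪b x, gradient q x⟫ - Pbgq x)
        + ⟪p x • b x - Pbp x, gradient q x - Pgq x⟫) μ := iA.add iB
    have iABC : Integrable (fun x => (p x - Pp x) * (⟪b x, gradient q x⟫ - Pbgq x)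
        + ⟪p x • b x - Pbp x, gradient q x - Pgq x⟫
        + (Pp x - p x) * (⟪b x, gradient q x⟫ - ⟪b x, Pgq x⟫)) μ := iAB.add iC
    have iABCZ : Integrable (fun x => (p x - Pp x) * (⟪b x, gradient q x⟫ - Pbgq x)
        + ⟪p x • b x - Pbp x, gradient q x - Pgq x⟫
        + (Pp x - p x) * (⟪b x, gradient q x⟫ - ⟪b x, Pgq x⟫)
        + (p x - Pp x) * Pbgq x) μ := iABC.add iZ1
    rw [this, integral_add iABCZ iZ2, integral_add iABC iZ1,
      integral_add iAB iC, integral_add iA iB, hZ1, hZ2]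
    ring
  -- bounds on the three terms
  have hA : (∫ x, (p x - Pp x) * (⟪b x, gradient q x⟫ - Pbgq x) ∂μ)
      ≤ errS E (fun x => ⟪b x, gradient q x⟫) Pbgq * errS E p Pp := by
    simp only [errS]
    rw [mul_comm]
    exact cs hd1 hd2
  have hB : (∫ x, ⟪p x • b x - Pbp x, gradient q x - Pgq x⟫ ∂μ)
      ≤ errV E (gradient q) Pgq * errV E (fun x => p x • b x) Pbp := by
    simp only [errV]
    have h1 : (∫ x, ⟪p x • b x - Pbp x, gradient q x - Pgq x⟫ ∂μ)
        ≤ ∫ x, ‖p x • b x - Pbp x‖ * ‖gradient q x - Pgq x‖ ∂μ :=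
      integral_mono iB (int_mul hdwn hdzn) fun x => real_inner_le_norm _ _
    refine h1.trans ?_
    rw [mul_comm]
    exact cs hdwn hdzn
  have hC : (∫ x, (Pp x - p x) * (⟪b x, gradient q x⟫ - ⟪b x, Pgq x⟫) ∂μ)
      ≤ bmax * errV E (gradient q) Pgq * errS E p Pp := by
    have h1 : (∫ x, (Pp x - p x) * (⟪b x, gradient q x⟫ - ⟪b x, Pgq x⟫) ∂μ)
        ≤ ∫ x, bmax * (‖gradient q x - Pgq x‖ * |p x - Pp x|) ∂μ := by
      refine integral_mono_ae iC ((int_mul hdzn hd1abs).const_mul bmax) ?_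
      filter_upwards [hbae] with x hx
      have e1 : ⟪b x, gradient q x⟫ - ⟪b x, Pgq x⟫ = ⟪b x, gradient q x - Pgq x⟫ :=
        (inner_sub_right _ _ _).symm
      rw [e1]
      calc (Pp x - p x) * ⟪b x, gradient q x - Pgq x⟫
          ≤ |(Pp x - p x) * ⟪b x, gradient q x - Pgq x⟫| := le_abs_self _
      _ = |Pp x - p x| * |⟪b x, gradient q x - Pgq x⟫| := abs_mul _ _
      _ ≤ |Pp x - p x| * (‖b x‖ * ‖gradient q x - Pgq x‖) :=
          mul_le_mul_of_nonneg_left (abs_real_inner_le_norm _ _) (abs_nonneg _)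
      _ ≤ |Pp x - p x| * (bmax * ‖gradient q x - Pgq x‖) := by
          gcongr
      _ = bmax * (‖gradient q x - Pgq x‖ * |p x - Pp x|) := by
          rw [abs_sub_comm]; ring
    refine h1.trans ?_
    rw [integral_const_mul, mul_assoc]
    refine mul_le_mul_of_nonneg_left ?_ hbmax0
    have h2 := cs hdzn hd1abs
    simp only [sq_abs] at h2
    simpa [errV, errS] using h2
  -- conclusion
  have hlhs : (-∫ x in E, Pp x * ⟪b x, Pgq x⟫) - (-∫ x in E, p x * ⟪b x, gradient q x⟫)
      = (∫ x, p x * ⟪b x, gradient q x⟫ ∂μ) - (∫ x, Pp x * ⟪b x, Pgq x⟫ ∂μ) := by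
    ring
  rw [hlhs, hsplit]
  exact add_le_add (add_le_add hA hB) hC
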